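/- Let M be a non-degenerate hypersurface of an indefinite locally Riemannian product manifold with induced (ε)-almost paracontact structure (φ, ξ, η, g) arising from JX = φX + η(X)N and JN = ξ. Then the induced Levi-Civita connection satisfies (∇_X φ)Y = η(Y)AX + ε g(AX,Y)ξ, (∇_X η)Y = −ε g(AX, φY), and ∇_X ξ = −φAX, where A is the shape operator. -/
import Mathlib

private lemma tangent_smul_normal {W : Type*} [AddCommGroup W] [Module ℝ W]
    (G : LinearMap.BilinForm ℝ W) (T : Submodule ℝ W) (N : W) (ε : ℝ)
    (hε : ε = 1 ∨ ε = -1) (hGNN : G N N = ε) (hNT : ∀ X ∈ T, G X N = 0)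
    (v : W) (hv : v ∈ T) (c : ℝ) (h : v = c • N) : c = 0 ∧ v = 0 := by
  have h1 : G v N = 0 := hNT v hv
  rw [h] at h1
  simp [hGNN] at h1
  have hεne : ε ≠ 0 := by rcases hε with h | h <;> simp [h]
  rcases h1 with h1 | h1
  · exact ⟨h1, by simp [h, h1]⟩
  · exact absurd h1 hεne

/-- For a non-degenerate hypersurface `M` (tangent spaces `T`) of an
indefinite locally Riemannian product manifold `(W, J, G)` with induced
(ε)-almost paracontact structure (`JN = ξ`, `JX = φX + η(X)N`), the induced
connection satisfies `(∇_X φ)Y = η(Y)AX + ε g(AX,Y)ξ`,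
`(∇_X η)Y = −ε g(AX, φY)` and `∇_X ξ = −φAX`, where `A` is the shape operator.
Here `Dη X Y` denotes the directional derivative `X(η(Y))`, so that
`(∇_X η)Y = Dη X Y − η(∇_X Y)`. -/
theorem hypersurface_induced_connection {W : Type*} [AddCommGroup W] [Module ℝ W]
    (J : W →ₗ[ℝ] W) (G : LinearMap.BilinForm ℝ W)
    (hGsym : ∀ X Y, G X Y = G Y X)
    (hJ2 : ∀ X, J (J X) = X)
    (hGJ : ∀ X Y, G (J X) (J Y) = G X Y)
    (T : Submodule ℝ W) (N : W) (ε : ℝ) (hε : ε = 1 ∨ ε = -1)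
    (hGNN : G N N = ε) (hNT : ∀ X ∈ T, G X N = 0)
    (hξT : J N ∈ T)
    (φ : W →ₗ[ℝ] W) (η : W →ₗ[ℝ] ℝ)
    (hφT : ∀ X ∈ T, φ X ∈ T)
    (hdec : ∀ X ∈ T, J X = φ X + η X • N)
    -- ambient and induced Levi-Civita connections, shape operator
    (nablaAmb : W → W → W) (nabla : W → W → W) (A : W →ₗ[ℝ] W)
    (hAT : ∀ X ∈ T, A X ∈ T)
    (hnablaT : ∀ X ∈ T, ∀ Y ∈ T, nabla X Y ∈ T)
    (haddAmb : ∀ X Y Z, nablaAmb X (Y + Z) = nablaAmb X Y + nablaAmb X Z)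
    -- ∇̃J = 0
    (hparJ : ∀ X Y, nablaAmb X (J Y) = J (nablaAmb X Y))
    -- Gauss and Weingarten formulas
    (hGauss : ∀ X ∈ T, ∀ Y ∈ T, nablaAmb X Y = nabla X Y + (ε * G (A X) Y) • N)
    (hWein : ∀ X ∈ T, nablaAmb X N = -(A X))
    -- directional derivative of the function η(Y) and Leibniz rule along N
    (Dη : W → W → ℝ)
    (hLeibN : ∀ X ∈ T, ∀ Y ∈ T,
      nablaAmb X (η Y • N) = Dη X Y • N + η Y • nablaAmb X N) :
    (∀ X ∈ T, ∀ Y ∈ T,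
      nabla X (φ Y) - φ (nabla X Y) = η Y • A X + (ε * G (A X) Y) • (J N)) ∧
    (∀ X ∈ T, ∀ Y ∈ T, Dη X Y - η (nabla X Y) = -(ε * G (A X) (φ Y))) ∧
    (∀ X ∈ T, nabla X (J N) = -φ (A X)) := by
  -- main computation for X, Y tangent
  have key : ∀ X ∈ T, ∀ Y ∈ T,
      (nabla X (φ Y) - φ (nabla X Y) = η Y • A X + (ε * G (A X) Y) • (J N)) ∧
      (Dη X Y - η (nabla X Y) = -(ε * G (A X) (φ Y))) := by
    intro X hX Y hY
    have h1 : nablaAmb X (J Y) = J (nablaAmb X Y) := hparJ X Y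
    have hnT : nabla X Y ∈ T := hnablaT X hX Y hY
    rw [hdec Y hY, haddAmb, hGauss X hX (φ Y) (hφT Y hY), hLeibN X hX Y hY,
      hWein X hX, hGauss X hX Y hY, map_add, map_smul, hdec _ hnT] at h1
    -- h1 : ∇XφY + c1•N + DηXY•N + ηY•(-AX) = φ∇XY + η(∇XY)•N + c2•JN
    set c : ℝ := η (nabla X Y) - (ε * G (A X) (φ Y)) - Dη X Y with hc
    set v : W := nabla X (φ Y) - η Y • A X - φ (nabla X Y) - (ε * G (A X) Y) • J N
      with hv
    have hvT : v ∈ T := by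
      exact sub_mem (sub_mem (sub_mem (hnablaT X hX (φ Y) (hφT Y hY))
        (Submodule.smul_mem T _ (hAT X hX))) (hφT _ hnT))
        (Submodule.smul_mem T _ hξT)
    have heq : v = c • N := by
      rw [hv, hc, sub_smul, sub_smul]
      linear_combination (norm := module) h1
    obtain ⟨hc0, hv0⟩ := tangent_smul_normal G T N ε hε hGNN hNT v hvT c heq
    constructor
    · rw [hv] at hv0
      linear_combination (norm := module) hv0
    · rw [hc] at hc0; linarith
  refine ⟨fun X hX Y hY => (key X hX Y hY).1, fun X hX Y hY => (key X hX Y hY).2,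
    fun X hX => ?_⟩
  have h1 : nablaAmb X (J N) = J (nablaAmb X N) := hparJ X N
  rw [hGauss X hX (J N) hξT, hWein X hX, map_neg, hdec _ (hAT X hX)] at h1
  set c : ℝ := -(η (A X)) - (ε * G (A X) (J N)) with hc
  set v : W := nabla X (J N) + φ (A X) with hv
  have hvT : v ∈ T := add_mem (hnablaT X hX (J N) hξT) (hφT _ (hAT X hX))
  have heq : v = c • N := by
    rw [hv, hc, sub_smul, neg_smul]
    linear_combination (norm := module) h1
  obtain ⟨hc0, hv0⟩ := tangent_smul_normal G T N ε hε hGNN hNT v hvT c heq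
  rw [hv] at hv0
  linear_combination (norm := module) hv0
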